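/- Let f ∈ ℚ[x] with f(0) ≠ 0 have no multiple roots and suppose no root of f is a root of rational. If the Galois-like group G_f^B or the Galois-like group G_f^ℚ is doubly homogeneous as a permutation group on the roots, then the lattice R_f^ℚ is trivial. -/

import Mathlib

noncomputable section

open Polynomial

/-- `z` is a root of rational: some positive power of `z` is rational. -/
def IsRootOfRational (z : ℂ) : Prop := ∃ k : ℕ, 0 < k ∧ ∃ q : ℚ, z ^ k = (q : ℂ)

/-- `z` is a rational number (viewed in `ℂ`). -/
def IsRat (z : ℂ) : Prop := ∃ q : ℚ, z = (q : ℂ)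

/-- The Galois-like group `G_f`: permutations of the (indexed) roots preserving all
multiplicative relations. -/
def GaloisLike {ι : Type*} [Fintype ι] (r : ι → ℂ) : Set (Equiv.Perm ι) :=
  {σ | ∀ v : ι → ℤ, (∏ i, r i ^ v i) = 1 → (∏ i, r (σ i) ^ v i) = 1}

/-- The Galois-like group `G_f^B`. -/
def GaloisLikeB {ι : Type*} [Fintype ι] (r : ι → ℂ) : Set (Equiv.Perm ι) :=
  {σ | ∀ v : ι → ℤ, IsRat (∏ i, r i ^ v i) → (∏ i, r (σ i) ^ v i) = ∏ i, r i ^ v i}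

/-- The Galois-like group `G_f^ℚ`. -/
def GaloisLikeQ {ι : Type*} [Fintype ι] (r : ι → ℂ) : Set (Equiv.Perm ι) :=
  {σ | ∀ v : ι → ℤ, IsRat (∏ i, r i ^ v i) → IsRat (∏ i, r (σ i) ^ v i)}

/-- The exponent lattice of the vector `w` is trivial. -/
def VecLatticeTrivial {ι : Type*} [Fintype ι] (w : ι → ℂ) : Prop :=
  ∀ u : ι → ℤ, (∏ i, w i ^ u i) = 1 → ∀ i j : ι, u i = u j

/-- The lattice `R_w^ℚ` of the vector `w` is trivial. -/
def VecLatticeQTrivial {ι : Type*} [Fintype ι] (w : ι → ℂ) : Prop :=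
  ∀ u : ι → ℤ, IsRat (∏ i, w i ^ u i) → ∀ i j : ι, u i = u j

/-- A subset `M ⊆ ℚ[G/H]` is ℚ-admissible: there is `μ ∈ ℚ[G]` with stabilizer
(under left multiplication) exactly `H` such that `mμ = 0` for all `m ∈ M`
(here `Σ_{g∈G} m(ḡ) • gμ = |H| ⋅ (mμ)`, so we express `mμ = 0` this way). -/
def IsQAdmissible {G : Type*} [Group G] (H : Subgroup G) (M : Set ((G ⧸ H) →₀ ℚ)) : Prop :=
  ∃ μ : MonoidAlgebra ℚ G,
    (∀ g : G, MonoidAlgebra.single g (1 : ℚ) * μ = μ ↔ g ∈ H) ∧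
    ∀ m ∈ M, (∑ᶠ g : G, m (QuotientGroup.mk g) • (MonoidAlgebra.single g (1 : ℚ) * μ)) = 0

/-- A ℚ-subspace of `ℚ[G/H]` is a `ℚ[G]`-submodule iff it is stable under the
permutation action of `G` on `G/H`. -/
def IsGStable {G : Type*} [Group G] (H : Subgroup G) (M : Submodule ℚ ((G ⧸ H) →₀ ℚ)) : Prop :=
  ∀ g : G, ∀ m ∈ M, Finsupp.mapDomain (fun x : G ⧸ H => g • x) m ∈ M

/-- The pair `(G,H)` is ℚ-trivial: the only ℚ-admissible `ℚ[G]`-submodules of `ℚ[G/H]`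
are `0` and `V₁` (the line of constant coefficient vectors). -/
def QTrivialPair {G : Type*} [Group G] (H : Subgroup G) : Prop :=
  ∀ M : Submodule ℚ ((G ⧸ H) →₀ ℚ), IsGStable H M →
    IsQAdmissible H (M : Set ((G ⧸ H) →₀ ℚ)) →
    M = ⊥ ∨ (M : Set ((G ⧸ H) →₀ ℚ)) = {m | ∃ a : ℚ, ∀ x, m x = a}

/-- The action of `G` on `G/H` is transitive. -/
def PairTransitive {G : Type*} [Group G] (H : Subgroup G) : Prop :=
  ∀ x y : G ⧸ H, ∃ g : G, g • x = y

/-- The action of `G` on `G/H` is doubly transitive. -/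
def PairDoublyTransitive {G : Type*} [Group G] (H : Subgroup G) : Prop :=
  ∀ x₁ x₂ y₁ y₂ : G ⧸ H, x₁ ≠ x₂ → y₁ ≠ y₂ → ∃ g : G, g • x₁ = y₁ ∧ g • x₂ = y₂

/-- The action of `G` on `G/H` is doubly homogeneous. -/
def PairDoublyHomogeneous {G : Type*} [Group G] (H : Subgroup G) : Prop :=
  ∀ x₁ x₂ y₁ y₂ : G ⧸ H, x₁ ≠ x₂ → y₁ ≠ y₂ →
    ∃ g : G, ({g • x₁, g • x₂} : Set (G ⧸ H)) = {y₁, y₂}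

/-- A set of permutations of `ι` acts transitively. -/
def SetTransitive {ι : Type*} (S : Set (Equiv.Perm ι)) : Prop :=
  ∀ i j : ι, ∃ σ ∈ S, σ i = j

/-- A set of permutations of `ι` acts doubly transitively. -/
def SetDoublyTransitive {ι : Type*} (S : Set (Equiv.Perm ι)) : Prop :=
  ∀ i j k l : ι, i ≠ j → k ≠ l → ∃ σ ∈ S, σ i = k ∧ σ j = l

/-- A set of permutations of `ι` acts doubly homogeneously. -/
def SetDoublyHomogeneous {ι : Type*} (S : Set (Equiv.Perm ι)) : Prop :=
  ∀ i j k l : ι, i ≠ j → k ≠ l → ∃ σ ∈ S, ({σ i, σ j} : Set ι) = {k, l}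



namespace Statement15Proofs

lemma isRat_one : IsRat 1 := ⟨1, by norm_num⟩

lemma isRat_mul {a b : ℂ} (ha : IsRat a) (hb : IsRat b) : IsRat (a * b) := by
  obtain ⟨p, rfl⟩ := ha; obtain ⟨q, rfl⟩ := hb; exact ⟨p * q, by push_cast; ring⟩

lemma isRat_inv {a : ℂ} (ha : IsRat a) : IsRat a⁻¹ := by
  obtain ⟨p, rfl⟩ := ha; exact ⟨p⁻¹, by push_cast; ring⟩

lemma isRat_zpow {a : ℂ} (ha : IsRat a) (c : ℤ) : IsRat (a ^ c) := by
  obtain ⟨p, rfl⟩ := ha; exact ⟨p ^ c, by rw [Rat.cast_zpow]⟩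

lemma rootOfRat_of_zpow {z : ℂ} (hz : z ≠ 0) {d : ℤ} (hd : d ≠ 0) (h : IsRat (z ^ d)) :
    IsRootOfRational z := by
  obtain ⟨q, hq⟩ := h
  rcases lt_or_gt_of_ne hd with hneg | hpos
  · refine ⟨(-d).toNat, by omega, q⁻¹, ?_⟩
    rw [← zpow_natCast, Int.toNat_of_nonneg (by omega), zpow_neg, hq, Rat.cast_inv]
  · refine ⟨d.toNat, by omega, q, ?_⟩
    rw [← zpow_natCast, Int.toNat_of_nonneg (by omega), hq]

lemma root_ne_zero (f : Polynomial ℚ) (hf0 : f.eval 0 ≠ 0) {z : ℂ}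
    (hz : Polynomial.aeval z f = 0) : z ≠ 0 := by
  rintro rfl
  rw [Polynomial.aeval_def, Polynomial.eval₂_at_zero] at hz
  rw [← Polynomial.coeff_zero_eq_eval_zero] at hf0
  rw [map_eq_zero_iff _ (algebraMap ℚ ℂ).injective] at hz
  exact hf0 hz

lemma prod_roots_isRat (f : Polynomial ℚ) (hf0 : f.eval 0 ≠ 0) (n : ℕ) (hn : n = f.natDegree)
    (r : Fin n → ℂ) (hinj : Function.Injective r)
    (hroot : ∀ i, Polynomial.aeval (r i) f = 0) : IsRat (∏ i, r i) := by
  classical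
  have hf : f ≠ 0 := fun h => hf0 (by simp [h])
  set F := f.map (algebraMap ℚ ℂ) with hF
  have hFne : F ≠ 0 := by
    simpa [hF] using (Polynomial.map_ne_zero_iff (algebraMap ℚ ℂ).injective).mpr hf
  have hdegF : F.natDegree = n := by
    rw [hn, hF, Polynomial.natDegree_map]
  have hmem : ∀ i, r i ∈ F.roots := by
    intro i
    rw [Polynomial.mem_roots hFne]
    have : F.eval (r i) = 0 := by
      rw [hF, Polynomial.eval_map, ← Polynomial.aeval_def]
      exact hroot i
    exact this
  set T : Multiset ℂ := Multiset.map r Finset.univ.val with hT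
  have hTnodup : T.Nodup := Multiset.Nodup.map hinj Finset.univ.nodup
  have hle : T ≤ F.roots := by
    rw [Multiset.le_iff_subset hTnodup]
    intro a ha
    obtain ⟨i, _, rfl⟩ := Multiset.mem_map.mp ha
    exact hmem i
  have hcardT : Multiset.card T = n := by simp [hT]
  have hcardR : Multiset.card F.roots ≤ n := hdegF ▸ Polynomial.card_roots' F
  have hTeq : T = F.roots := Multiset.eq_of_le_of_card_le hle (by omega)
  have hsplits : Polynomial.Splits F :=
    (Polynomial.splits_iff_card_roots).mpr (by rw [← hTeq, hcardT, hdegF])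
  have hfac := hsplits.eq_prod_roots
  have heval := congrArg (Polynomial.eval 0) hfac
  rw [Polynomial.eval_mul, Polynomial.eval_C, Polynomial.eval_multiset_prod] at heval
  have hev0 : F.eval 0 = ((f.eval 0 : ℚ) : ℂ) := by
    rw [hF, Polynomial.eval_map, Polynomial.eval₂_at_zero, ← Polynomial.coeff_zero_eq_eval_zero]
    norm_num
  have hlc : F.leadingCoeff = ((f.leadingCoeff : ℚ) : ℂ) := by
    rw [hF, Polynomial.leadingCoeff_map]; norm_num
  have hprodeval : ((F.roots.map fun a => X - C a).map (Polynomial.eval 0)).prod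
      = (-1 : ℂ) ^ n * ∏ i, r i := by
    rw [← hTeq]
    simp only [hT, Multiset.map_map, Function.comp]
    simp only [Polynomial.eval_sub, Polynomial.eval_X, Polynomial.eval_C, zero_sub]
    rw [show (Multiset.map (fun i => -r i) Finset.univ.val) = Multiset.map (fun i => (-1) * r i) Finset.univ.val by simp]
    rw [Multiset.prod_map_mul]
    simp [Finset.prod]
  rw [Multiset.map_map] at heval
  have key : ((f.eval 0 : ℚ) : ℂ) = ((f.leadingCoeff : ℚ) : ℂ) * ((-1 : ℂ) ^ n * ∏ i, r i) := by
    rw [← hev0, ← hlc, ← hprodeval, heval]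
    rw [Multiset.map_map]
  have hlcne : f.leadingCoeff ≠ 0 := Polynomial.leadingCoeff_ne_zero.mpr hf
  refine ⟨(-1 : ℚ) ^ n * f.eval 0 / f.leadingCoeff, ?_⟩
  have hlcC : ((f.leadingCoeff : ℚ) : ℂ) ≠ 0 := by exact_mod_cast hlcne
  field_simp
  push_cast
  rw [key]
  have h1 : ((-1 : ℂ) ^ (n * 2)) = 1 := by rw [mul_comm n 2, pow_mul]; norm_num
  ring_nf
  rw [h1]
  field_simp

variable {n : ℕ} {r : Fin n → ℂ}

lemma P_add (hr0 : ∀ i, r i ≠ 0) (u v : Fin n → ℤ) :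
    (∏ i, r i ^ (u i + v i)) = (∏ i, r i ^ u i) * ∏ i, r i ^ v i := by
  rw [← Finset.prod_mul_distrib]
  exact Finset.prod_congr rfl fun i _ => zpow_add₀ (hr0 i) _ _

lemma P_smul (c : ℤ) (v : Fin n → ℤ) :
    (∏ i, r i ^ (c * v i)) = (∏ i, r i ^ v i) ^ c := by
  rw [← Finset.prod_zpow]
  exact Finset.prod_congr rfl fun i _ => by rw [← zpow_mul, mul_comm]

lemma R_sum {α : Type*} [DecidableEq α] (hr0 : ∀ i, r i ≠ 0) (F : Finset α) (c : α → ℤ)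
    (v : α → Fin n → ℤ) (h : ∀ a ∈ F, IsRat (∏ i, r i ^ v a i)) :
    IsRat (∏ i, r i ^ (∑ a ∈ F, c a * v a i)) := by
  induction F using Finset.induction with
  | empty => simpa using isRat_one
  | insert a F hx ih =>
      have : (∏ i, r i ^ (∑ b ∈ insert a F, c b * v b i))
          = (∏ i, r i ^ (c a * v a i)) * ∏ i, r i ^ (∑ b ∈ F, c b * v b i) := by
        rw [← P_add hr0]
        exact Finset.prod_congr rfl fun i _ => by rw [Finset.sum_insert hx]
      rw [this]
      refine isRat_mul ?_ (ih fun b hb => h b (Finset.mem_insert_of_mem hb))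
      rw [P_smul]
      exact isRat_zpow (h a (Finset.mem_insert_self a F)) _


lemma prod_perm (σ : Equiv.Perm (Fin n)) (v : Fin n → ℤ) :
    (∏ i, r (σ i) ^ v i) = ∏ i, r i ^ v (σ.symm i) := by
  rw [← Equiv.prod_comp σ (fun i => r i ^ v (σ.symm i))]
  exact Finset.prod_congr rfl fun i _ => by rw [Equiv.symm_apply_apply]

lemma one_mem_S : (1 : Equiv.Perm (Fin n)) ∈ GaloisLikeQ r := fun v h => by simpa using h

lemma mul_mem_S {σ τ : Equiv.Perm (Fin n)} (hσ : σ ∈ GaloisLikeQ r) (hτ : τ ∈ GaloisLikeQ r) :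
    σ * τ ∈ GaloisLikeQ r := by
  intro v hv
  have h1 := hτ v hv
  rw [prod_perm] at h1
  have h2 := hσ _ h1
  rw [prod_perm] at h2
  rw [prod_perm]
  have : ∀ i, v ((σ * τ).symm i) = v (τ.symm (σ.symm i)) := fun i => rfl
  simpa [this] using h2

lemma pow_mem_S {σ : Equiv.Perm (Fin n)} (hσ : σ ∈ GaloisLikeQ r) :
    ∀ k : ℕ, σ ^ k ∈ GaloisLikeQ r := by
  intro k
  induction k with
  | zero => simpa using (one_mem_S (r := r))
  | succ k ih => rw [pow_succ]; exact mul_mem_S ih hσ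

lemma inv_mem_S {σ : Equiv.Perm (Fin n)} (hσ : σ ∈ GaloisLikeQ r) : σ⁻¹ ∈ GaloisLikeQ r := by
  have hpos : 0 < orderOf σ := orderOf_pos σ
  have : σ ^ (orderOf σ - 1) = σ⁻¹ := by
    apply eq_inv_of_mul_eq_one_left
    rw [← pow_succ, Nat.sub_add_cancel hpos]
    exact pow_orderOf_eq_one σ
  rw [← this]
  exact pow_mem_S hσ _

lemma Rcomp (hσinv : ∀ {σ : Equiv.Perm (Fin n)}, σ ∈ GaloisLikeQ r → σ⁻¹ ∈ GaloisLikeQ r)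
    {σ : Equiv.Perm (Fin n)} (hσ : σ ∈ GaloisLikeQ r) (v : Fin n → ℤ)
    (hv : IsRat (∏ x, r x ^ v x)) : IsRat (∏ x, r x ^ v (σ x)) := by
  have h1 := hσinv hσ v hv
  rw [prod_perm] at h1
  simpa [Equiv.Perm.inv_def] using h1
lemma pair_eq_cases {α : Type*} {a b c d : α} (hab : a ≠ b) (h : ({a, b} : Set α) = {c, d}) :
    (a = c ∧ b = d) ∨ (a = d ∧ b = c) := by
  have ha : a = c ∨ a = d := by
    have : a ∈ ({c, d} : Set α) := h ▸ (by simp)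
    simpa using this
  have hb : b = c ∨ b = d := by
    have : b ∈ ({c, d} : Set α) := h ▸ (by simp)
    simpa using this
  rcases ha with rfl | rfl
  · rcases hb with rfl | rfl
    · exact absurd rfl hab
    · exact Or.inl ⟨rfl, rfl⟩
  · rcases hb with rfl | rfl
    · exact Or.inr ⟨rfl, rfl⟩
    · exact absurd rfl hab

lemma key (hr0 : ∀ i, r i ≠ 0) (h2h : SetDoublyHomogeneous (GaloisLikeQ r))
    (u : Fin n → ℤ) (hu : IsRat (∏ x, r x ^ u x))
    {i j : Fin n} (hij : i ≠ j) (huij : u i ≠ u j)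
    {m : Fin n} (hmi : m ≠ i) (hmj : m ≠ j)
    (hs : (∑ x, u x) ≠ 0) : ∃ d : ℤ, d ≠ 0 ∧ IsRat (r i ^ d) := by
  classical
  set H : Finset (Equiv.Perm (Fin n)) := (Set.toFinite (GaloisLikeQ r)).toFinset with hH
  have memH : ∀ σ, σ ∈ H ↔ σ ∈ GaloisLikeQ r := fun σ => Set.Finite.mem_toFinset _
  have huσ : ∀ σ ∈ H, IsRat (∏ x, r x ^ u (σ x)) := fun σ hσ =>
    Rcomp (fun h => inv_mem_S h) ((memH σ).1 hσ) u hu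
  set C : Fin n → Fin n → ℤ := fun k l => ∑ σ ∈ H, u (σ k) * u (σ l) with hC
  have Csymm : ∀ k l, C k l = C l k := fun k l =>
    Finset.sum_congr rfl fun σ _ => mul_comm _ _
  have Creindex : ∀ τ ∈ GaloisLikeQ r, ∀ k l, C (τ k) (τ l) = C k l := by
    intro τ hτ k l
    refine (Finset.sum_equiv (Equiv.mulRight τ⁻¹) ?_ ?_).symm
    · intro σ
      simp only [memH, Equiv.coe_mulRight]
      exact ⟨fun h => mul_mem_S h (inv_mem_S hτ), fun h => by
        have := mul_mem_S h hτ; simpa using this⟩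
    · intro σ _
      simp [Equiv.Perm.mul_apply]
  have htrans : ∀ k k', ∃ τ ∈ GaloisLikeQ r, τ k = k' := by
    intro k k'
    by_cases hkk : k = k'
    · exact ⟨1, one_mem_S, by simp [hkk]⟩
    · have hp : ∃ p, p ≠ k ∧ p ≠ k' := by
        by_cases h1 : i ≠ k ∧ i ≠ k'
        · exact ⟨i, h1⟩
        by_cases h2 : j ≠ k ∧ j ≠ k'
        · exact ⟨j, h2⟩
        push_neg at h1 h2
        refine ⟨m, ?_, ?_⟩
        · rintro rfl
          rcases Classical.em (i = m) with rfl | hi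
          · exact hmi rfl
          · have hik' : i = k' := by tauto
            have : j = m ∨ j = k' := by tauto
            rcases this with rfl | rfl
            · exact hmj rfl
            · exact hij (hik'.trans rfl)
        · rintro rfl
          rcases Classical.em (i = m) with rfl | hi
          · exact hmi rfl
          · have hik : i = k := by tauto
            have : j = k ∨ j = m := by tauto
            rcases this with rfl | rfl
            · exact hij (hik.trans rfl)
            · exact hmj rfl
      obtain ⟨p, hpk, hpk'⟩ := hp
      obtain ⟨σ, hσS, hσ⟩ := h2h k p k' p (Ne.symm hpk) (Ne.symm hpk')
      rcases pair_eq_cases (σ.injective.ne (Ne.symm hpk)) hσ with ⟨h1, h2⟩ | ⟨h1, h2⟩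
      · exact ⟨σ, hσS, h1⟩
      · refine ⟨σ * σ, mul_mem_S hσS hσS, ?_⟩
        rw [Equiv.Perm.mul_apply, h1, h2]
  have Cconst : ∀ k l k' l', k ≠ l → k' ≠ l' → C k l = C k' l' := by
    intro k l k' l' hkl hkl'
    obtain ⟨τ, hτS, hτ⟩ := h2h k l k' l' hkl hkl'
    rcases pair_eq_cases (τ.injective.ne hkl) hτ with ⟨h1, h2⟩ | ⟨h1, h2⟩
    · rw [← h1, ← h2, Creindex τ hτS]
    · rw [← h1, ← h2, Creindex τ hτS, Csymm]
  have Dconst : ∀ k k', C k k = C k' k' := by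
    intro k k'
    obtain ⟨τ, hτS, hτ⟩ := htrans k k'
    rw [← hτ, Creindex τ hτS]
  set t : ℤ := C i i - C i j with ht
  have h1H : (1 : Equiv.Perm (Fin n)) ∈ H := (memH 1).2 one_mem_S
  have htpos : 0 < t := by
    have h2t : C i i - C i j + (C j j - C j i) = ∑ σ ∈ H, (u (σ i) - u (σ j)) ^ 2 := by
      simp only [hC, ← Finset.sum_sub_distrib, ← Finset.sum_add_distrib]
      exact Finset.sum_congr rfl fun σ _ => by ring
    have hpos : 0 < ∑ σ ∈ H, (u (σ i) - u (σ j)) ^ 2 := by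
      refine Finset.sum_pos' (fun σ _ => sq_nonneg _) ⟨1, h1H, ?_⟩
      have hne : u ((1 : Equiv.Perm (Fin n)) i) - u ((1 : Equiv.Perm (Fin n)) j) ≠ 0 := by
        simpa using sub_ne_zero.mpr huij
      positivity
    have hDj : C j j = C i i := Dconst j i
    have hCji : C j i = C i j := Csymm j i
    omega
  have hW : ∀ k l : Fin n, k ≠ l →
      IsRat (∏ x, r x ^ (if x = k then t else if x = l then -t else 0)) := by
    intro k l hkl
    have hform : ∀ x, (if x = k then t else if x = l then -t else 0)
        = ∑ σ ∈ H, (u (σ k) - u (σ l)) * u (σ x) := by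
      intro x
      have hsum : ∑ σ ∈ H, (u (σ k) - u (σ l)) * u (σ x) = C k x - C l x := by
        simp only [hC, ← Finset.sum_sub_distrib]
        exact Finset.sum_congr rfl fun σ _ => by ring
      rw [hsum]
      by_cases hxk : x = k
      · subst hxk
        rw [if_pos rfl, Dconst x i, Cconst l x i j (Ne.symm hkl) hij]
      · by_cases hxl : x = l
        · subst hxl
          rw [if_neg hxk, if_pos rfl, Cconst k x i j hkl hij, Dconst x i]
          rw [ht]; ring
        · rw [if_neg hxk, if_neg hxl,
            Cconst k x i j (fun h => hxk h.symm) hij, Cconst l x i j (fun h => hxl h.symm) hij]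
          ring
    have hbig := R_sum hr0 H (fun σ => u (σ k) - u (σ l)) (fun σ x => u (σ x)) huσ
    simp only [← hform] at hbig
    exact hbig
  set s : ℤ := ∑ x, u x with hsdef
  refine ⟨t * s, mul_ne_zero htpos.ne' hs, ?_⟩
  have hform : ∀ x, (if x = i then t * s else 0)
      = t * u x + ∑ l ∈ Finset.univ.erase i,
          u l * (if x = i then t else if x = l then -t else 0) := by
    intro x
    by_cases hxi : x = i
    · subst hxi
      simp only [eq_self_iff_true, if_true]
      rw [← Finset.sum_mul, hsdef, ← Finset.add_sum_erase Finset.univ u (Finset.mem_univ x)]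
      ring
    · simp only [if_neg hxi, mul_ite, mul_zero, mul_neg]
      rw [Finset.sum_ite_eq]
      rw [if_pos (Finset.mem_erase.mpr ⟨hxi, Finset.mem_univ x⟩)]
      ring
  have hbig : IsRat (∏ x, r x ^ (t * u x + ∑ l ∈ Finset.univ.erase i,
      u l * (if x = i then t else if x = l then -t else 0))) := by
    rw [P_add hr0 (fun x => t * u x) (fun x => ∑ l ∈ Finset.univ.erase i,
        u l * (if x = i then t else if x = l then -t else 0))]
    refine isRat_mul ?_ ?_
    · rw [P_smul]; exact isRat_zpow hu t
    · exact R_sum hr0 (Finset.univ.erase i) u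
        (fun l x => if x = i then t else if x = l then -t else 0)
        (fun l hl => hW i l (fun h => (Finset.mem_erase.mp hl).1 h.symm))
  simp only [← hform] at hbig
  have hval : (∏ x, r x ^ (if x = i then t * s else 0)) = r i ^ (t * s) := by
    rw [Finset.prod_congr rfl (fun x _ => show r x ^ (if x = i then t * s else 0)
        = if x = i then r x ^ (t * s) else 1 by split <;> simp)]
    rw [Finset.prod_ite_eq' Finset.univ i (fun x => r x ^ (t * s))]
    simp
  rw [← hval]
  exact hbig

end Statement15Proofs

open Statement15Proofs in
/-- Let `f ∈ ℚ[x]` with `f(0) ≠ 0` have no multiple roots and suppose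
no root of `f` is a root of rational. If `G_f^B` or `G_f^ℚ` is doubly homogeneous as a
permutation group on the roots, then the lattice `R_f^ℚ` is trivial. -/
theorem statement15 (f : Polynomial ℚ) (hf0 : f.eval 0 ≠ 0) (n : ℕ) (hn : n = f.natDegree)
    (r : Fin n → ℂ) (hinj : Function.Injective r)
    (hroot : ∀ i, Polynomial.aeval (r i) f = 0)
    (hall : ∀ z : ℂ, Polynomial.aeval z f = 0 → ∃ i, r i = z)
    (hnr : ∀ i, ¬ IsRootOfRational (r i))
    (h2h : SetDoublyHomogeneous (GaloisLikeB r) ∨ SetDoublyHomogeneous (GaloisLikeQ r)) :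
    VecLatticeQTrivial r := by
  classical
  have hr0 : ∀ i, r i ≠ 0 := fun i => root_ne_zero f hf0 (hroot i)
  have hone : IsRat (∏ i, r i) := prod_roots_isRat f hf0 n hn r hinj hroot
  have h2hQ : SetDoublyHomogeneous (GaloisLikeQ r) := by
    rcases h2h with h | h
    · intro a b c d hab hcd
      obtain ⟨σ, hσ, hpair⟩ := h a b c d hab hcd
      exact ⟨σ, fun v hv => (hσ v hv) ▸ hv, hpair⟩
    · exact h
  intro u hu i j
  by_contra hne
  have hij : i ≠ j := fun h => hne (by rw [h])
  by_cases hm : ∃ m, m ≠ i ∧ m ≠ j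
  · obtain ⟨m, hmi, hmj⟩ := hm
    set c : ℤ := 1 + |∑ x, u x| with hc
    have hu' : IsRat (∏ x, r x ^ (u x + c * 1)) := by
      rw [P_add hr0 u (fun _ => c * 1)]
      refine isRat_mul hu ?_
      rw [P_smul c (fun _ => 1)]
      exact isRat_zpow (by simpa using hone) c
    have hu'ij : (fun x => u x + c * 1) i ≠ (fun x => u x + c * 1) j := by
      simpa using hne
    have hnpos : 1 ≤ (n : ℤ) := by exact_mod_cast i.pos
    have hcpos : (0 : ℤ) < c := by rw [hc]; positivity
    have hsum' : (∑ x, (u x + c * 1)) = (∑ x, u x) + (n : ℤ) * c := by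
      rw [Finset.sum_add_distrib, Finset.sum_const]
      simp [mul_comm]
    have hs' : (∑ x, (u x + c * 1)) ≠ 0 := by
      rw [hsum']
      have h1 : -(∑ x, u x) ≤ |∑ x, u x| := neg_le_abs _
      have h2 : 1 * c ≤ (n : ℤ) * c := mul_le_mul_of_nonneg_right hnpos hcpos.le
      have : (0:ℤ) < (∑ x, u x) + (n : ℤ) * c := by
        rw [hc] at h2 ⊢
        linarith
      exact this.ne'
    obtain ⟨d, hd0, hdrat⟩ := key hr0 h2hQ (fun x => u x + c * 1) hu' hij hu'ij hmi hmj hs'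
    exact hnr i (rootOfRat_of_zpow (hr0 i) hd0 hdrat)
  · push_neg at hm
    have hv : IsRat (∏ x, r x ^ (u x + (-(u j)) * 1)) := by
      rw [P_add hr0 u (fun _ => (-(u j)) * 1)]
      refine isRat_mul hu ?_
      rw [P_smul (-(u j)) (fun _ => 1)]
      exact isRat_zpow (by simpa using hone) _
    have huniv : (Finset.univ : Finset (Fin n)) = {i, j} := by
      ext x
      simp only [Finset.mem_univ, Finset.mem_insert, Finset.mem_singleton, true_iff]
      rcases eq_or_ne x i with rfl | hxi
      · exact Or.inl rfl
      · exact Or.inr (hm x hxi)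
    have hprod : (∏ x, r x ^ (u x + (-(u j)) * 1)) = r i ^ (u i + (-(u j)) * 1) := by
      rw [huniv, Finset.prod_insert (by simp [hij]), Finset.prod_singleton]
      have hz : u j + (-(u j)) * 1 = 0 := by ring
      rw [hz, zpow_zero, mul_one]
    rw [hprod] at hv
    have hd0 : u i + (-(u j)) * 1 ≠ 0 := by
      intro h
      exact hne (by omega)
    exact hnr i (rootOfRat_of_zpow (hr0 i) hd0 hv)

end
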